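/- arXiv:2208.07518 — 5 statements merged into one kernel-verified Lean document; each statement's English description precedes it below -/
import Mathlib

section
/- The unique optimal solution of the problem: minimize x₂² + |x₁ - x₂| subject to 2x₁ + x₂ ≥ 0 and x₁² + x₂² = 1, is x* = (√2/2, √2/2). -/
/-- The unique optimal solution of: minimize `x₂² + |x₁ - x₂|` subject to
`2x₁ + x₂ ≥ 0` and `x₁² + x₂² = 1`, is `x* = (√2/2, √2/2)`. -/
theorem stmt_0 :
    let f : ℝ × ℝ → ℝ := fun x => x.2 ^ 2 + |x.1 - x.2|
    let feasible : ℝ × ℝ → Prop := fun x => 2 * x.1 + x.2 ≥ 0 ∧ x.1 ^ 2 + x.2 ^ 2 = 1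
    let xstar : ℝ × ℝ := (Real.sqrt 2 / 2, Real.sqrt 2 / 2)
    feasible xstar ∧ ∀ x : ℝ × ℝ, feasible x → x ≠ xstar → f xstar < f x := by
  intro f feasible xstar
  have hs2 : Real.sqrt 2 ^ 2 = 2 := Real.sq_sqrt (by norm_num)
  have hs2nn : (0:ℝ) ≤ Real.sqrt 2 := Real.sqrt_nonneg 2
  have hsq : (Real.sqrt 2 / 2) ^ 2 = 1 / 2 := by rw [div_pow, hs2]; norm_num
  have hfeas : feasible xstar := by
    constructor
    · simp only [xstar]; positivity
    · simp only [xstar]; rw [hsq]; norm_num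
  refine ⟨hfeas, ?_⟩
  rintro x ⟨hge, hcirc⟩ hne
  have hfx : f xstar = 1 / 2 := by
    simp only [f, xstar, sub_self, abs_zero, add_zero, hsq]
  rw [hfx]
  show (1:ℝ)/2 < x.2 ^ 2 + |x.1 - x.2|
  by_cases hb : x.2 ^ 2 < 1 / 2
  · -- |x₁| > |x₂| case
    set a := |x.1| with ha
    set b := |x.2| with hbdef
    have ha0 : 0 ≤ a := abs_nonneg _
    have hb0 : 0 ≤ b := abs_nonneg _
    have hasq : a ^ 2 = x.1 ^ 2 := sq_abs _
    have hbsq : b ^ 2 = x.2 ^ 2 := sq_abs _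
    have hsum : a ^ 2 + b ^ 2 = 1 := by rw [hasq, hbsq]; exact hcirc
    have hblt : b ^ 2 < 1 / 2 := by rw [hbsq]; exact hb
    have hc : (0:ℝ) < 1 / 2 + b - b ^ 2 := by nlinarith
    have hsqlt : (1 / 2 + b - b ^ 2) ^ 2 < a ^ 2 := by nlinarith [sq_nonneg (b - 1)]
    have hagt : 1 / 2 + b - b ^ 2 < a := by nlinarith
    have habs : a - b ≤ |x.1 - x.2| := abs_sub_abs_le_abs_sub x.1 x.2
    linarith [hbsq.symm ▸ (le_refl (b ^ 2))]
  · push_neg at hb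
    by_cases heq : x.1 = x.2
    · exfalso
      have h2 : x.2 ^ 2 = 1 / 2 := by nlinarith
      have hpos : 0 ≤ x.2 := by rw [heq] at hge; linarith
      have hx2 : x.2 = Real.sqrt 2 / 2 := by
        have h1 : x.2 ^ 2 = (Real.sqrt 2 / 2) ^ 2 := by rw [h2, hsq]
        have h3 : (0:ℝ) ≤ Real.sqrt 2 / 2 := by positivity
        nlinarith [sq_nonneg (x.2 - Real.sqrt 2 / 2), sq_nonneg (x.2 + Real.sqrt 2 / 2)]
      exact hne (Prod.ext (heq.trans hx2) hx2)
    · have hpos : 0 < |x.1 - x.2| := abs_pos.mpr (sub_ne_zero.mpr heq)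
      linarith
end

section
/- Let θ(x) = μ‖x‖₁ on ℝⁿ, x ∈ ℝⁿ, and ξ ∈ ℝⁿ. The lower second order epiderivative satisfies θ⁻↓↓(x; ξ, w) = μ·(Σ_{i: x_i=0, ξ_i=0} |w_i| + Σ_{i: x_i>0 or (x_i=0, ξ_i>0)} w_i − Σ_{i: x_i<0 or (x_i=0, ξ_i<0)} w_i). -/
open Filter Finset

set_option maxHeartbeats 1000000

/-- For `θ(x) = μ‖x‖₁` on `ℝⁿ`, the lower second order epiderivative
`θ⁻↓↓(x; ξ, w) = liminf_{t↓0, w'→w} [θ(x + tξ + (t²/2)w') − θ(x) − t·θ'(x;ξ)]/(t²/2)`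
equals
`μ·(Σ_{x_i=0, ξ_i=0} |w_i| + Σ_{x_i>0 ∨ (x_i=0, ξ_i>0)} w_i − Σ_{x_i<0 ∨ (x_i=0, ξ_i<0)} w_i)`,
where `θ'(x;ξ) = μ·(Σ_{x_i=0} |ξ_i| + Σ_{x_i>0} ξ_i − Σ_{x_i<0} ξ_i)`. -/
theorem stmt_7 (n : ℕ) (μ : ℝ) (hμ : 0 < μ) (x ξ w : Fin n → ℝ) :
    Filter.liminf
      (fun p : ℝ × (Fin n → ℝ) =>
        ((μ * ∑ i, |x i + p.1 * ξ i + p.1 ^ 2 / 2 * p.2 i|)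
          - μ * ∑ i, |x i|
          - p.1 * (μ * ((∑ i ∈ univ.filter (fun i => x i = 0), |ξ i|)
              + (∑ i ∈ univ.filter (fun i => 0 < x i), ξ i)
              - (∑ i ∈ univ.filter (fun i => x i < 0), ξ i)))) / (p.1 ^ 2 / 2))
      ((nhdsWithin 0 (Set.Ioi 0)) ×ˢ nhds w)
    = μ * ((∑ i ∈ univ.filter (fun i => x i = 0 ∧ ξ i = 0), |w i|)
        + (∑ i ∈ univ.filter (fun i => 0 < x i ∨ (x i = 0 ∧ 0 < ξ i)), w i)
        - (∑ i ∈ univ.filter (fun i => x i < 0 ∨ (x i = 0 ∧ ξ i < 0)), w i)) := by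
  classical
  set g : Fin n → ℝ → ℝ := fun i v =>
    if x i = 0 ∧ ξ i = 0 then |v|
    else if 0 < x i ∨ (x i = 0 ∧ 0 < ξ i) then v else -v with hg
  set d : Fin n → ℝ := fun i =>
    if x i = 0 then |ξ i| else if 0 < x i then ξ i else -ξ i with hd
  have hgsum : ∀ v : Fin n → ℝ,
      (∑ i ∈ univ.filter (fun i => x i = 0 ∧ ξ i = 0), |v i|)
        + (∑ i ∈ univ.filter (fun i => 0 < x i ∨ (x i = 0 ∧ 0 < ξ i)), v i)
        - (∑ i ∈ univ.filter (fun i => x i < 0 ∨ (x i = 0 ∧ ξ i < 0)), v i)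
      = ∑ i, g i (v i) := by
    intro v
    rw [Finset.sum_filter, Finset.sum_filter, Finset.sum_filter,
      ← Finset.sum_add_distrib, ← Finset.sum_sub_distrib]
    refine Finset.sum_congr rfl fun i _ => ?_
    rcases lt_trichotomy (x i) 0 with hx | hx | hx
    · simp [hg, hx.ne, not_lt.2 hx.le, hx]
    · rcases lt_trichotomy (ξ i) 0 with hξ | hξ | hξ
      · simp [hg, hx, hξ.ne, not_lt.2 hξ.le, hξ, lt_irrefl]
      · simp [hg, hx, hξ, lt_irrefl]
      · simp [hg, hx, hξ.ne', not_lt.2 hξ.le, hξ, lt_irrefl]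
    · simp [hg, hx.ne', not_lt.2 hx.le, hx]
  have hdsum :
      (∑ i ∈ univ.filter (fun i => x i = 0), |ξ i|)
        + (∑ i ∈ univ.filter (fun i => 0 < x i), ξ i)
        - (∑ i ∈ univ.filter (fun i => x i < 0), ξ i)
      = ∑ i, d i := by
    rw [Finset.sum_filter, Finset.sum_filter, Finset.sum_filter,
      ← Finset.sum_add_distrib, ← Finset.sum_sub_distrib]
    refine Finset.sum_congr rfl fun i _ => ?_
    rcases lt_trichotomy (x i) 0 with hx | hx | hx
    · simp [hd, hx, hx.ne, not_lt.2 hx.le]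
    · simp [hd, hx, lt_irrefl]
    · simp [hd, hx, hx.ne', not_lt.2 hx.le]
  have key : ∀ i : Fin n, ∀ᶠ p : ℝ × (Fin n → ℝ) in (nhdsWithin 0 (Set.Ioi 0)) ×ˢ nhds w,
      (|x i + p.1 * ξ i + p.1 ^ 2 / 2 * p.2 i| - |x i| - p.1 * d i) / (p.1 ^ 2 / 2)
        = g i (p.2 i) := by
    intro i
    set B : ℝ := |w i| + 1 with hB
    have hB1 : 1 ≤ B := by have := abs_nonneg (w i); linarith
    have hw : ∀ᶠ v : Fin n → ℝ in nhds w, |v i - w i| < 1 := by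
      have h : Filter.Tendsto (fun v : Fin n → ℝ => v i) (nhds w) (nhds (w i)) :=
        (continuous_apply i).tendsto w
      have := h (Metric.ball_mem_nhds (w i) one_pos)
      filter_upwards [this] with v hv
      simpa [Real.dist_eq] using hv
    rcases lt_trichotomy (x i) 0 with hx | hx | hx
    · -- x i < 0
      set ε : ℝ := min 1 (-x i / (|ξ i| + B + 1)) with hε
      have hε0 : 0 < ε := lt_min one_pos (div_pos (by linarith) (by positivity))
      have ht : ∀ᶠ t : ℝ in nhdsWithin 0 (Set.Ioi 0), t ∈ Set.Ioo 0 ε :=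
        Ioo_mem_nhdsGT_of_mem ⟨le_refl 0, hε0⟩
      filter_upwards [Filter.Eventually.prod_mk ht hw] with p hp
      obtain ⟨⟨ht0, htε⟩, hwc⟩ := hp
      set t := p.1; set c := p.2 i; set a := x i; set b := ξ i
      have hc : |c| ≤ B := by
        have := abs_sub_abs_le_abs_sub c (w i); simp only [hB]; linarith
      have ht1 : t ≤ 1 := le_trans htε.le (min_le_left _ _)
      have ht2 : t * (|b| + B + 1) ≤ -a := by
        have h2 : t ≤ -a / (|b| + B + 1) := le_trans htε.le (min_le_right _ _)
        rwa [le_div_iff₀ (by positivity)] at h2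
      have hts : t ^ 2 / 2 ≤ t := by nlinarith
      have habs : |a + t * b + t ^ 2 / 2 * c| = -(a + t * b + t ^ 2 / 2 * c) := by
        apply abs_of_nonpos
        nlinarith [neg_abs_le b, le_abs_self b, neg_abs_le c, le_abs_self c, abs_nonneg b,
          abs_nonneg c, sq_nonneg t]
      have hdi : d i = -b := by
        have hx' : x i < 0 := hx; show d i = -ξ i; simp [hd, hx'.ne, not_lt.2 hx'.le]
      have hgi : g i c = -c := by
        have hx' : x i < 0 := hx; simp [hg, hx'.ne, not_lt.2 hx'.le, hx']
      rw [habs, hdi, hgi, abs_of_neg hx]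
      field_simp
      ring
    · -- x i = 0
      rcases lt_trichotomy (ξ i) 0 with hb | hb | hb
      · -- ξ i < 0
        set ε : ℝ := min 1 (-ξ i / B) with hε
        have hε0 : 0 < ε := lt_min one_pos (div_pos (by linarith) (by positivity))
        have ht : ∀ᶠ t : ℝ in nhdsWithin 0 (Set.Ioi 0), t ∈ Set.Ioo 0 ε :=
          Ioo_mem_nhdsGT_of_mem ⟨le_refl 0, hε0⟩
        filter_upwards [Filter.Eventually.prod_mk ht hw] with p hp
        obtain ⟨⟨ht0, htε⟩, hwc⟩ := hp
        set t := p.1; set c := p.2 i; set b := ξ i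
        have hc : |c| ≤ B := by
          have := abs_sub_abs_le_abs_sub c (w i); simp only [hB]; linarith
        have ht2 : t * B ≤ -b := by
          have h2 : t ≤ -b / B := le_trans htε.le (min_le_right _ _)
          rwa [le_div_iff₀ (by positivity)] at h2
        have habs : |x i + t * b + t ^ 2 / 2 * c| = -(x i + t * b + t ^ 2 / 2 * c) := by
          apply abs_of_nonpos
          rw [hx]
          nlinarith [neg_abs_le c, le_abs_self c, abs_nonneg c, sq_nonneg t]
        have hdi : d i = -b := by
          have hb' : ξ i < 0 := hb; show d i = -ξ i; simp [hd, hx, abs_of_neg hb']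
        have hgi : g i c = -c := by
          have hb' : ξ i < 0 := hb; simp [hg, hx, hb'.ne, not_lt.2 hb'.le, hb', lt_irrefl]
        rw [habs, hdi, hgi, hx]
        field_simp
        ring
      · -- ξ i = 0
        have ht : ∀ᶠ t : ℝ in nhdsWithin 0 (Set.Ioi 0), t ∈ Set.Ioi 0 :=
          self_mem_nhdsWithin
        filter_upwards [Filter.Eventually.prod_mk ht hw] with p hp
        obtain ⟨ht0, _⟩ := hp
        have ht0 : (0:ℝ) < p.1 := ht0
        have hdi : d i = 0 := by simp [hd, hx, hb]
        have hgi : g i (p.2 i) = |p.2 i| := by simp [hg, hx, hb]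
        rw [hdi, hgi, hx, hb]
        rw [abs_of_nonneg (le_refl (0:ℝ))]
        have h2 : (0:ℝ) < p.1 ^ 2 / 2 := by positivity
        rw [show (0:ℝ) + p.1 * 0 + p.1 ^ 2 / 2 * p.2 i = p.1 ^ 2 / 2 * p.2 i by ring]
        rw [abs_mul, abs_of_pos h2]
        field_simp
        ring
      · -- ξ i > 0
        set ε : ℝ := min 1 (ξ i / B) with hε
        have hε0 : 0 < ε := lt_min one_pos (div_pos hb (by positivity))
        have ht : ∀ᶠ t : ℝ in nhdsWithin 0 (Set.Ioi 0), t ∈ Set.Ioo 0 ε :=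
          Ioo_mem_nhdsGT_of_mem ⟨le_refl 0, hε0⟩
        filter_upwards [Filter.Eventually.prod_mk ht hw] with p hp
        obtain ⟨⟨ht0, htε⟩, hwc⟩ := hp
        set t := p.1; set c := p.2 i; set b := ξ i
        have hc : |c| ≤ B := by
          have := abs_sub_abs_le_abs_sub c (w i); simp only [hB]; linarith
        have ht2 : t * B ≤ b := by
          have h2 : t ≤ b / B := le_trans htε.le (min_le_right _ _)
          rwa [le_div_iff₀ (by positivity)] at h2
        have habs : |x i + t * b + t ^ 2 / 2 * c| = x i + t * b + t ^ 2 / 2 * c := by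
          apply abs_of_nonneg
          rw [hx]
          nlinarith [neg_abs_le c, le_abs_self c, abs_nonneg c, sq_nonneg t]
        have hdi : d i = b := by
          have hb' : 0 < ξ i := hb; show d i = ξ i; simp [hd, hx, abs_of_pos hb']
        have hgi : g i c = c := by
          have hb' : 0 < ξ i := hb; simp [hg, hx, hb'.ne', hb']
        rw [habs, hdi, hgi, hx]
        field_simp
        ring
    · -- 0 < x i
      set ε : ℝ := min 1 (x i / (|ξ i| + B + 1)) with hε
      have hε0 : 0 < ε := lt_min one_pos (div_pos hx (by positivity))
      have ht : ∀ᶠ t : ℝ in nhdsWithin 0 (Set.Ioi 0), t ∈ Set.Ioo 0 ε :=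
        Ioo_mem_nhdsGT_of_mem ⟨le_refl 0, hε0⟩
      filter_upwards [Filter.Eventually.prod_mk ht hw] with p hp
      obtain ⟨⟨ht0, htε⟩, hwc⟩ := hp
      set t := p.1; set c := p.2 i; set a := x i; set b := ξ i
      have hc : |c| ≤ B := by
        have := abs_sub_abs_le_abs_sub c (w i); simp only [hB]; linarith
      have ht1 : t ≤ 1 := le_trans htε.le (min_le_left _ _)
      have ht2 : t * (|b| + B + 1) ≤ a := by
        have h2 : t ≤ a / (|b| + B + 1) := le_trans htε.le (min_le_right _ _)
        rwa [le_div_iff₀ (by positivity)] at h2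
      have hts : t ^ 2 / 2 ≤ t := by nlinarith
      have habs : |a + t * b + t ^ 2 / 2 * c| = a + t * b + t ^ 2 / 2 * c := by
        apply abs_of_nonneg
        nlinarith [neg_abs_le b, le_abs_self b, neg_abs_le c, le_abs_self c, abs_nonneg b,
          abs_nonneg c, sq_nonneg t]
      have hdi : d i = b := by
        have hx' : 0 < x i := hx; show d i = ξ i; simp [hd, hx'.ne', hx']
      have hgi : g i c = c := by
        have hx' : 0 < x i := hx; simp [hg, hx'.ne', hx']
      rw [habs, hdi, hgi, abs_of_pos hx]
      field_simp
      ring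
  have heq : (fun p : ℝ × (Fin n → ℝ) =>
        ((μ * ∑ i, |x i + p.1 * ξ i + p.1 ^ 2 / 2 * p.2 i|)
          - μ * ∑ i, |x i|
          - p.1 * (μ * ((∑ i ∈ univ.filter (fun i => x i = 0), |ξ i|)
              + (∑ i ∈ univ.filter (fun i => 0 < x i), ξ i)
              - (∑ i ∈ univ.filter (fun i => x i < 0), ξ i)))) / (p.1 ^ 2 / 2))
      =ᶠ[(nhdsWithin 0 (Set.Ioi 0)) ×ˢ nhds w]
      (fun p => μ * ∑ i, g i (p.2 i)) := by
    refine (eventually_all.2 key).mono fun p hp => ?_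
    beta_reduce
    rw [hdsum]
    have hnum : μ * (∑ i, |x i + p.1 * ξ i + p.1 ^ 2 / 2 * p.2 i|) - μ * ∑ i, |x i|
        - p.1 * (μ * ∑ i, d i)
        = μ * ∑ i, (|x i + p.1 * ξ i + p.1 ^ 2 / 2 * p.2 i| - |x i| - p.1 * d i) := by
      rw [Finset.sum_sub_distrib, Finset.sum_sub_distrib, ← Finset.mul_sum]
      ring
    rw [hnum, mul_div_assoc, Finset.sum_div]
    exact congrArg (fun s => μ * s) (Finset.sum_congr rfl fun i _ => hp i)
  rw [Filter.liminf_congr heq, hgsum w]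
  have cont : Continuous (fun v : Fin n → ℝ => μ * ∑ i, g i (v i)) := by
    apply continuous_const.mul
    apply continuous_finset_sum
    intro i _
    have hcg : Continuous (g i) := by
      simp only [hg]
      split_ifs <;> fun_prop
    exact hcg.comp (continuous_apply i)
  haveI : (nhdsWithin (0:ℝ) (Set.Ioi 0)).NeBot := nhdsGT_neBot 0
  have htd : Filter.Tendsto (fun p : ℝ × (Fin n → ℝ) => μ * ∑ i, g i (p.2 i))
      ((nhdsWithin 0 (Set.Ioi 0)) ×ˢ nhds w) (nhds (μ * ∑ i, g i (w i))) :=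
    (cont.tendsto w).comp tendsto_snd
  exact htd.liminf_eq
end

section
/- Let x* ∈ S^{n-1} and y* a multiplier satisfying y* ∈ μ∂‖x*‖₁ and Π_{x*}(∇f(x*)+y*) = 0. Then every element d of the normal space N_{x*}S^{n-1} = {a·x* : a ∈ ℝ} satisfies θ'(x*; d) = ⟨d, y*⟩, where θ = μ‖·‖₁; consequently T_{x*}S^{n-1} + C_{θ}(x*, y*) = ℝⁿ, where C_θ(x*,y*) = {d : θ'(x*; d) = ⟨d, y*⟩}. -/
open Filter Finset

/-- Let `x* ∈ S^{n-1}` and `y*` a multiplier with `y* ∈ μ∂‖x*‖₁` and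
`Π_{x*}(∇f(x*) + y*) = 0`. Then every `d = a·x*` in the normal space satisfies
`θ'(x*; d) = ⟨d, y*⟩` (with `θ = μ‖·‖₁`), and consequently
`T_{x*}S^{n-1} + C_θ(x*, y*) = ℝⁿ`, where
`C_θ(x*,y*) = {d : θ'(x*; d) = ⟨d, y*⟩}`. -/
theorem stmt_9 (n : ℕ) (μ : ℝ) (hμ : 0 < μ) (xstar g ystar : Fin n → ℝ)
    (hx : ∑ i, xstar i ^ 2 = 1)
    (hsub : ∀ i, (0 < xstar i → ystar i = μ) ∧ (xstar i < 0 → ystar i = -μ) ∧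
      (xstar i = 0 → |ystar i| ≤ μ))
    (hstat : ∀ i, (g i + ystar i) - (∑ j, xstar j * (g j + ystar j)) * xstar i = 0) :
    -- critical cone of θ = μ‖·‖₁: directions where the one-sided directional
    -- derivative of θ at x* equals ⟨d, y*⟩
    let C : Set (Fin n → ℝ) := {d | Tendsto
      (fun t : ℝ => ((μ * ∑ i, |xstar i + t * d i|) - μ * ∑ i, |xstar i|) / t)
      (nhdsWithin 0 (Set.Ioi 0)) (nhds (∑ i, d i * ystar i))}
    (∀ a : ℝ, (fun i => a * xstar i) ∈ C) ∧
      (∀ z : Fin n → ℝ, ∃ ξ d : Fin n → ℝ,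
        (∑ i, xstar i * ξ i) = 0 ∧ d ∈ C ∧ z = ξ + d) := by
  intro C
  have key : ∀ i, xstar i * ystar i = μ * |xstar i| := by
    intro i
    rcases lt_trichotomy (xstar i) 0 with h | h | h
    · rw [(hsub i).2.1 h, abs_of_neg h]; ring
    · simp [h]
    · rw [(hsub i).1 h, abs_of_pos h]; ring
  have hC : ∀ a : ℝ, (fun i => a * xstar i) ∈ C := by
    intro a
    have hsum : ∑ i, (a * xstar i) * ystar i = μ * a * ∑ i, |xstar i| := by
      rw [Finset.mul_sum]
      refine Finset.sum_congr rfl fun i _ => ?_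
      rw [mul_assoc, key i]; ring
    show Tendsto _ _ (nhds (∑ i, (a * xstar i) * ystar i))
    rw [hsum]
    have hb : (0:ℝ) < (|a| + 1)⁻¹ := by positivity
    have hev : ∀ᶠ t in nhdsWithin (0:ℝ) (Set.Ioi 0),
        ((μ * ∑ i, |xstar i + t * (a * xstar i)|) - μ * ∑ i, |xstar i|) / t
          = μ * a * ∑ i, |xstar i| := by
      filter_upwards [Ioo_mem_nhdsGT_of_mem (Set.left_mem_Ico.2 hb)] with t ht
      obtain ⟨ht0, htb⟩ := ht
      have hpos : 0 < 1 + t * a := by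
        have h1 : |t * a| < 1 := by
          rw [abs_mul, abs_of_pos ht0]
          calc t * |a| ≤ t * (|a| + 1) := by nlinarith [abs_nonneg a]
            _ < (|a| + 1)⁻¹ * (|a| + 1) := by
                apply mul_lt_mul_of_pos_right htb; positivity
            _ = 1 := by field_simp
        nlinarith [neg_abs_le (t * a), abs_nonneg (t * a)]
      have habs : ∀ i, |xstar i + t * (a * xstar i)| = (1 + t * a) * |xstar i| := by
        intro i
        have : xstar i + t * (a * xstar i) = (1 + t * a) * xstar i := by ring
        rw [this, abs_mul, abs_of_pos hpos]
      simp only [habs]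
      rw [← Finset.mul_sum]
      field_simp
      ring
    exact Tendsto.congr' (hev.mono fun t h => h.symm) tendsto_const_nhds
  refine ⟨hC, fun z => ?_⟩
  refine ⟨fun i => z i - (∑ j, xstar j * z j) * xstar i,
    fun i => (∑ j, xstar j * z j) * xstar i, ?_, hC _, ?_⟩
  · have : ∑ i, xstar i * (z i - (∑ j, xstar j * z j) * xstar i)
        = (∑ i, xstar i * z i) - (∑ j, xstar j * z j) * ∑ i, xstar i ^ 2 := by
      rw [Finset.mul_sum, ← Finset.sum_sub_distrib]
      refine Finset.sum_congr rfl fun i _ => ?_; ring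
    rw [this, hx]; ring
  · funext i; show z i = _ + _; ring
end

section
/- Let g₂ : M → Z be a map, x* a point, and suppose for every multiplier pair: whenever Dg₂(x*)*λ = 0 and λ ∈ R_{N_Q(g₂(x*))}(y*) imply λ = 0, then the set of Lagrange multipliers M(x*) = {y ∈ N_Q(g₂(x*)) : grad f(x*) + Dg₂(x*)*y = 0} containing y* is a singleton: M(x*) = {y*}. Conversely, if M(x*) = {y*}, then [Dg₂(x*)T_{x*}M]^⊥ ∩ R_{N_Q(g₂(x*))}(y*) = {0}. -/
open Set

/-- Uniqueness of Lagrange multipliers (Proposition 3.2, linear-algebraic form).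
With `V` modeling the tangent space `T_{x*}M`, `A = Dg₂(x*) : V → Z`,
`G = grad f(x*)`, `q = g₂(x*) ∈ Q`, `N = N_Q(q)` the normal cone,
`R = R_N(y*)` the radial cone of `N` at `y*`, and
`M(x*) = {y ∈ N : G + A*y = 0}`:
if every `λ` with `A*λ = 0` and `λ ∈ R` is zero, then `M(x*) = {y*}`;
conversely, if `M(x*) = {y*}` then `ker A* ∩ R = {0}`. -/
theorem stmt_13 {V Z : Type*}
    [NormedAddCommGroup V] [InnerProductSpace ℝ V] [FiniteDimensional ℝ V]
    [NormedAddCommGroup Z] [InnerProductSpace ℝ Z] [FiniteDimensional ℝ Z]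
    (A : V →ₗ[ℝ] Z) (G : V) (Q : Set Z) (hQne : Q.Nonempty) (hQcl : IsClosed Q)
    (hQconv : Convex ℝ Q) (q : Z) (hq : q ∈ Q)
    (N : Set Z) (hN : N = {z : Z | ∀ x ∈ Q, inner ℝ z (x - q) ≤ (0 : ℝ)})
    (ystar : Z)
    (M : Set Z) (hM : M = {y ∈ N | G + LinearMap.adjoint A y = 0})
    (hystar : ystar ∈ M)
    (R : Set Z)
    (hR : R = {d : Z | ∃ tstar > (0 : ℝ), ∀ t ∈ Set.Icc 0 tstar,
      ystar + t • d ∈ N}) :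
    ((∀ lam : Z, LinearMap.adjoint A lam = 0 → lam ∈ R → lam = 0) → M = {ystar}) ∧
    (M = {ystar} →
      {lam : Z | LinearMap.adjoint A lam = 0} ∩ R = {0}) := by
  rw [hM] at hystar
  obtain ⟨hyN, hyA⟩ := hystar
  constructor
  · intro h
    ext y
    simp only [Set.mem_singleton_iff]
    constructor
    · intro hy
      rw [hM] at hy
      obtain ⟨hN1, hA1⟩ := hy
      have hker : LinearMap.adjoint A (y - ystar) = 0 := by
        have h2 : LinearMap.adjoint A y = LinearMap.adjoint A ystar :=
          add_left_cancel (hA1.trans hyA.symm)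
        rw [map_sub, h2, sub_self]
      have hrad : (y - ystar) ∈ R := by
        rw [hR]
        refine ⟨1, one_pos, fun t ht => ?_⟩
        have h1 : ystar + t • (y - ystar) = (1 - t) • ystar + t • y := by
          module
        rw [hN] at hN1 hyN ⊢
        intro x hx
        rw [h1]
        have hle := hN1 x hx
        have hle' := hyN x hx
        have : inner ℝ ((1 - t) • ystar + t • y) (x - q)
            = (1 - t) * inner ℝ ystar (x - q) + t * inner ℝ y (x - q) := by
          rw [inner_add_left, real_inner_smul_left, real_inner_smul_left]
        rw [this]
        have h1t : (0:ℝ) ≤ 1 - t := by linarith [ht.2]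
        nlinarith [ht.1]
      exact sub_eq_zero.mp (h _ hker hrad)
    · intro hy
      rw [hM, hy]
      exact ⟨hyN, hyA⟩
  · intro hMeq
    ext lam
    simp only [Set.mem_inter_iff, Set.mem_setOf_eq, Set.mem_singleton_iff]
    constructor
    · rintro ⟨hker, hrad⟩
      rw [hR] at hrad
      obtain ⟨t, ht, hmem⟩ := hrad
      have hNmem : ystar + t • lam ∈ N := hmem t ⟨le_of_lt ht, le_refl t⟩
      have hMmem : ystar + t • lam ∈ M := by
        rw [hM]
        refine ⟨hNmem, ?_⟩
        rw [map_add, map_smul, hker, smul_zero, add_zero]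
        exact hyA
      rw [hMeq, Set.mem_singleton_iff] at hMmem
      have : t • lam = 0 := by
        have := hMmem
        nth_rewrite 2 [← add_zero ystar] at this
        exact add_left_cancel this
      rcases smul_eq_zero.mp this with h | h
      · exact absurd h (ne_of_gt ht)
      · exact h
    · intro h
      subst h
      refine ⟨map_zero _, ?_⟩
      rw [hR]
      refine ⟨1, one_pos, fun t _ => ?_⟩
      simpa using hyN
end

section
/- Let M = {x ∈ 𝕏 : h(x) = 0} where h : 𝕏 → ℝ^m is smooth with h'(x) surjective for all x ∈ M, so T_xM = ker h'(x). Then for a feasible point x (i.e., g(x) ∈ K), the manifold Robinson CQ g'(x)(ker h'(x)) + T_K(g(x)) = Y holds if and only if the Euclidean Robinson CQ holds: for all (d₁, d₂) ∈ Y × ℝ^m there exist ξ ∈ 𝕏 and η ∈ T_K(g(x)) with g'(x)ξ + η = d₁ and h'(x)ξ = d₂. -/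
open Set

/-- Let `M = {x : h(x) = 0}` with `h'(x)` surjective, so `T_xM = ker h'(x)`.
Writing `A = g'(x)`, `B = h'(x)`, and `TK = T_K(g(x))` (the tangent cone to the
closed convex set `K` at the feasible value `gx ∈ K`), the manifold Robinson CQ
`A(ker B) + TK = Y` holds iff the Euclidean Robinson CQ holds: for all
`(d₁, d₂)` there exist `ξ` and `η ∈ TK` with `Aξ + η = d₁` and `Bξ = d₂`. -/
theorem stmt_15 {X Y : Type*} (m : ℕ)
    [NormedAddCommGroup X] [InnerProductSpace ℝ X] [FiniteDimensional ℝ X]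
    [NormedAddCommGroup Y] [InnerProductSpace ℝ Y] [FiniteDimensional ℝ Y]
    (A : X →ₗ[ℝ] Y) (B : X →ₗ[ℝ] EuclideanSpace ℝ (Fin m))
    (hB : Function.Surjective B)
    (K : Set Y) (hKcl : IsClosed K) (hKconv : Convex ℝ K)
    (gx : Y) (hgx : gx ∈ K)
    (TK : Set Y) (hTK : TK = closure {d : Y | ∃ t > (0 : ℝ), gx + t • d ∈ K}) :
    ({v : Y | ∃ ξ ∈ LinearMap.ker B, ∃ η ∈ TK, v = A ξ + η} = Set.univ) ↔
      (∀ (d₁ : Y) (d₂ : EuclideanSpace ℝ (Fin m)),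
        ∃ (ξ : X) (η : Y), η ∈ TK ∧ A ξ + η = d₁ ∧ B ξ = d₂) := by
  constructor
  · intro h d₁ d₂
    obtain ⟨ξ₀, hξ₀⟩ := hB d₂
    have hv : (d₁ - A ξ₀) ∈ {v : Y | ∃ ξ ∈ LinearMap.ker B, ∃ η ∈ TK, v = A ξ + η} := by
      rw [h]; trivial
    obtain ⟨ξ, hξ, η, hη, hveq⟩ := hv
    refine ⟨ξ + ξ₀, η, hη, ?_, ?_⟩
    · rw [map_add]
      have : A ξ + η = d₁ - A ξ₀ := hveq.symm
      linear_combination (norm := abel) this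
    · rw [map_add, LinearMap.mem_ker.mp hξ, zero_add, hξ₀]
  · intro h
    ext v
    simp only [Set.mem_setOf_eq, Set.mem_univ, iff_true]
    obtain ⟨ξ, η, hη, h1, h2⟩ := h v 0
    exact ⟨ξ, LinearMap.mem_ker.mpr h2, η, hη, h1.symm⟩
end
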